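/- Suppose A ⊆ ℕ is an oracle and there exists a total computable function g such that for every f ≤_T A there is a (D,g)-trace tracing f. Then A is of hyperimmune-free degree and A is not DNR. -/

import Mathlib

open Filter

namespace CichonAnalog

/-! ### Oracle computability -/

/-- Partial functions `ℕ →. ℕ` partial recursive relative to the oracle `A ⊆ ℕ`.
This is Mathlib's `Nat.Partrec` with an extra base case for the characteristic
function of the oracle. -/
inductive RecursiveIn (A : Set ℕ) : (ℕ →. ℕ) → Prop
  | zero : RecursiveIn A (pure 0)
  | succ : RecursiveIn A ↑Nat.succ
  | left : RecursiveIn A ↑fun n : ℕ => n.unpair.1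
  | right : RecursiveIn A ↑fun n : ℕ => n.unpair.2
  | oracle : RecursiveIn A ↑fun n : ℕ => A.indicator (fun _ => 1) n
  | pair {f g} : RecursiveIn A f → RecursiveIn A g →
      RecursiveIn A fun n => Nat.pair <$> f n <*> g n
  | comp {f g} : RecursiveIn A f → RecursiveIn A g →
      RecursiveIn A fun n => g n >>= f
  | prec {f g} : RecursiveIn A f → RecursiveIn A g →
      RecursiveIn A (Nat.unpaired fun a n =>
        n.rec (f a) fun y IH => do let i ← IH; g (Nat.pair a (Nat.pair y i)))
  | rfind {f} : RecursiveIn A f →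
      RecursiveIn A fun a => Nat.rfind fun n => (fun m => m = 0) <$> f (Nat.pair a n)

/-- The partial function `f` (between coded spaces) is partial recursive in the oracle `A`. -/
def PartrecIn (A : Set ℕ) {α σ : Type} [Primcodable α] [Primcodable σ] (f : α →. σ) : Prop :=
  RecursiveIn A fun n =>
    Part.bind ↑(Encodable.decode (α := α) n) fun a => (f a).map Encodable.encode

/-- `f ≤_T A` : the (total) function `f` is computable from the oracle `A`. -/
def ComputableIn (A : Set ℕ) {α σ : Type} [Primcodable α] [Primcodable σ] (f : α → σ) : Prop :=
  PartrecIn A (f : α →. σ)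

/-- `W` is computably enumerable in the oracle `A`. -/
def CEIn (A : Set ℕ) {α : Type} [Primcodable α] (W : Set α) : Prop :=
  ∃ f : α →. ℕ, PartrecIn A f ∧ ∀ a, a ∈ W ↔ (f a).Dom

/-- `W` is computably enumerable (unrelativized). -/
def CE {α : Type} [Primcodable α] (W : Set α) : Prop :=
  ∃ f : α →. ℕ, Partrec f ∧ ∀ a, a ∈ W ↔ (f a).Dom

/-! ### Cantor space, `Π⁰₁` classes, effective meagerness -/

/-- The basic clopen set (cylinder) of the finite binary string `σ` in Cantor space. -/
def Cyl (σ : List Bool) : Set (ℕ → Bool) :=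
  {x | ∀ i, i < σ.length → x i = σ.getD i false}

/-- `P` is a `Π⁰₁(A)` class: a closed subset of Cantor space whose complement is the
union of basic clopen sets over a set of strings c.e. in `A`. -/
def Pi01In (A : Set ℕ) (P : Set (ℕ → Bool)) : Prop :=
  ∃ W : Set (List Bool), CEIn A W ∧ P = (⋃ σ ∈ W, Cyl σ)ᶜ

/-- `P` is a (plain) `Π⁰₁` class. -/
def Pi01 (P : Set (ℕ → Bool)) : Prop :=
  ∃ W : Set (List Bool), CE W ∧ P = (⋃ σ ∈ W, Cyl σ)ᶜ

/-- `C` is a uniformly `Π⁰₁(A)` sequence of classes. -/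
def UnifPi01In (A : Set ℕ) (C : ℕ → Set (ℕ → Bool)) : Prop :=
  ∃ W : Set (ℕ × List Bool), CEIn A W ∧
    ∀ m, C m = (⋃ σ ∈ {s | (m, s) ∈ W}, Cyl σ)ᶜ

/-- `C` is a uniformly `Π⁰₁` sequence of classes. -/
def UnifPi01 (C : ℕ → Set (ℕ → Bool)) : Prop :=
  ∃ W : Set (ℕ × List Bool), CE W ∧
    ∀ m, C m = (⋃ σ ∈ {s | (m, s) ∈ W}, Cyl σ)ᶜ

/-- `S` is effectively meager relative to `A`: it is contained in the union of a
uniformly `Π⁰₁(A)` sequence of nowhere dense classes. -/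
def EffMeagerIn (A : Set ℕ) (S : Set (ℕ → Bool)) : Prop :=
  ∃ C : ℕ → Set (ℕ → Bool), UnifPi01In A C ∧ (∀ m, IsNowhereDense (C m)) ∧ S ⊆ ⋃ m, C m

/-- `S` is effectively meager (unrelativized). -/
def EffMeager (S : Set (ℕ → Bool)) : Prop :=
  ∃ C : ℕ → Set (ℕ → Bool), UnifPi01 C ∧ (∀ m, IsNowhereDense (C m)) ∧ S ⊆ ⋃ m, C m

/-- `A` is meager engulfing: some `A`-effectively meager set contains every
effectively meager set. -/
def MeagerEngulfing (A : Set ℕ) : Prop :=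
  ∃ S, EffMeagerIn A S ∧ ∀ T, EffMeager T → T ⊆ S

/-- `A` is weakly meager engulfing: some `A`-effectively meager set contains every
computable element of Cantor space. -/
def WeaklyMeagerEngulfing (A : Set ℕ) : Prop :=
  ∃ S, EffMeagerIn A S ∧ ∀ x : ℕ → Bool, Computable x → x ∈ S

/-- `V` is a computable set of finite binary strings. -/
def ComputableStringSet (V : Set (List Bool)) : Prop :=
  ∃ χ : List Bool → Bool, Computable χ ∧ ∀ s, s ∈ V ↔ χ s = true

/-- `V` is a dense set of finite binary strings: every string has an extension in `V`. -/
def DenseStringSet (V : Set (List Bool)) : Prop :=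
  ∀ σ : List Bool, ∃ τ ∈ V, σ <+: τ

/-- `x ∈ 2^ω` is weakly 1-generic: for every computable dense set `V` of finite
binary strings, some initial segment of `x` lies in `V`. -/
def Weakly1Generic (x : ℕ → Bool) : Prop :=
  ∀ V : Set (List Bool), ComputableStringSet V → DenseStringSet V →
    ∃ n, (List.ofFn fun i : Fin n => x i) ∈ V

/-! ### Domination properties -/

/-- `A` is high: `A` computes a function dominating every total computable function. -/
def High (A : Set ℕ) : Prop :=
  ∃ f : ℕ → ℕ, ComputableIn A f ∧
    ∀ g : ℕ → ℕ, Computable g → ∀ᶠ n in atTop, g n ≤ f n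

/-- `A` is of hyperimmune degree: `A` computes a function not dominated by any
computable function. -/
def HyperimmuneDegree (A : Set ℕ) : Prop :=
  ∃ f : ℕ → ℕ, ComputableIn A f ∧
    ∀ g : ℕ → ℕ, Computable g → ∃ᶠ n in atTop, g n < f n

/-- `A` is of hyperimmune-free degree: every function computable in `A` is dominated
by a total computable function. -/
def HyperimmuneFree (A : Set ℕ) : Prop :=
  ∀ f : ℕ → ℕ, ComputableIn A f →
    ∃ g : ℕ → ℕ, Computable g ∧ ∀ᶠ n in atTop, f n ≤ g n

/-! ### Measure on Cantor space, Kurtz and Schnorr tests -/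

open scoped Classical in
/-- The uniform measure of the clopen set `⋃ σ ∈ F, [σ]` determined by the finite
list `F` of binary strings: count the binary strings of maximal length extending
some member of `F`, and normalize. -/
noncomputable def listMeasure (F : List (List Bool)) : ℚ :=
  letI k := (F.map List.length).foldr max 0
  ((Finset.univ.filter fun v : Fin k → Bool =>
      ∃ σ ∈ F, σ <+: List.ofFn v).card : ℚ) / 2 ^ k

/-- The clopen subset of Cantor space given explicitly as a finite union of
basic clopen sets. -/
def ClopSet (F : List (List Bool)) : Set (ℕ → Bool) := ⋃ σ ∈ F, Cyl σ

/-- The effectively open subset of Cantor space enumerated by the sequence of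
finite stages `g`. -/
def OpenSet (g : ℕ → List (List Bool)) : Set (ℕ → Bool) := ⋃ s, ClopSet (g s)

/-- The measure of the open set enumerated by the stages `g`: the supremum of the
measures of its finite partial unions. -/
noncomputable def openMeasure (g : ℕ → List (List Bool)) : ℝ :=
  ⨆ s : ℕ, (listMeasure ((List.range (s + 1)).flatMap g) : ℝ)

/-- A Kurtz test relative to `A`: an `A`-computable sequence of explicitly given
clopen sets, the `m`-th of measure at most `2 ^ (-m)`. -/
def KurtzTestIn (A : Set ℕ) (G : ℕ → List (List Bool)) : Prop :=
  ComputableIn A G ∧ ∀ m, listMeasure (G m) ≤ (1 / 2) ^ m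

/-- A (plain) Kurtz test. -/
def KurtzTest (G : ℕ → List (List Bool)) : Prop :=
  Computable G ∧ ∀ m, listMeasure (G m) ≤ (1 / 2) ^ m

/-- A Schnorr test relative to `A`: an `A`-computable doubly indexed sequence of finite
stages such that the `m`-th effectively open set `⋃ s, ClopSet (g m s)` has measure at
most `2 ^ (-m)`, and this measure is a real computable in `A` uniformly in `m`. -/
def SchnorrTestIn (A : Set ℕ) (g : ℕ → ℕ → List (List Bool)) : Prop :=
  ComputableIn A (fun p : ℕ × ℕ => g p.1 p.2) ∧
  (∀ m, openMeasure (g m) ≤ (1 / 2) ^ m) ∧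
  ∃ q : ℕ × ℕ → ℚ, ComputableIn A q ∧
    ∀ m k, |openMeasure (g m) - (q (m, k) : ℝ)| ≤ (1 / 2) ^ k

/-- A (plain) Schnorr test. -/
def SchnorrTest (g : ℕ → ℕ → List (List Bool)) : Prop :=
  Computable (fun p : ℕ × ℕ => g p.1 p.2) ∧
  (∀ m, openMeasure (g m) ≤ (1 / 2) ^ m) ∧
  ∃ q : ℕ × ℕ → ℚ, Computable q ∧
    ∀ m k, |openMeasure (g m) - (q (m, k) : ℝ)| ≤ (1 / 2) ^ k

/-- `N` is Schnorr null relative to `A`. -/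
def SchnorrNullIn (A : Set ℕ) (N : Set (ℕ → Bool)) : Prop :=
  ∃ g, SchnorrTestIn A g ∧ N ⊆ ⋂ m, OpenSet (g m)

/-- `N` is Schnorr null (unrelativized). -/
def SchnorrNull (N : Set (ℕ → Bool)) : Prop :=
  ∃ g, SchnorrTest g ∧ N ⊆ ⋂ m, OpenSet (g m)

/-- `x ∈ 2^ω` is Schnorr random: it belongs to no Schnorr null set. -/
def SchnorrRandom (x : ℕ → Bool) : Prop := ∀ N, SchnorrNull N → x ∉ N

/-- `A` is Kurtz engulfing: there is an `A`-computable sequence of Kurtz tests relative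
to `A` such that every Kurtz null set is contained in the null set of one of them. -/
def KurtzEngulfing (A : Set ℕ) : Prop :=
  ∃ G : ℕ → ℕ → List (List Bool),
    ComputableIn A (fun p : ℕ × ℕ => G p.1 p.2) ∧
    (∀ i m, listMeasure (G i m) ≤ (1 / 2) ^ m) ∧
    ∀ L, KurtzTest L → ∃ i, (⋂ m, ClopSet (L m)) ⊆ ⋂ m, ClopSet (G i m)

/-- `A` is weakly Kurtz engulfing: there is an `A`-computable sequence of Kurtz tests
relative to `A` such that the union of their null sets contains every computable
element of Cantor space. -/
def WeaklyKurtzEngulfing (A : Set ℕ) : Prop :=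
  ∃ G : ℕ → ℕ → List (List Bool),
    ComputableIn A (fun p : ℕ × ℕ => G p.1 p.2) ∧
    (∀ i m, listMeasure (G i m) ≤ (1 / 2) ^ m) ∧
    ∀ x : ℕ → Bool, Computable x → ∃ i, x ∈ ⋂ m, ClopSet (G i m)

/-- `A` is weakly Schnorr engulfing: some set Schnorr null relative to `A` contains
every computable element of Cantor space. -/
def WeaklySchnorrEngulfing (A : Set ℕ) : Prop :=
  ∃ N, SchnorrNullIn A N ∧ ∀ x : ℕ → Bool, Computable x → x ∈ N

/-! ### DNR and PA degrees -/

/-- The `e`-th partial computable function. -/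
noncomputable def phi (e : ℕ) : ℕ →. ℕ := (Denumerable.ofNat Nat.Partrec.Code e).eval

/-- `h` is diagonally nonrecursive. -/
def DNRFun (h : ℕ → ℕ) : Prop := ∀ e, ∀ y ∈ phi e e, h e ≠ y

/-- `A` is DNR: `A` computes a diagonally nonrecursive function. -/
def DNRDegree (A : Set ℕ) : Prop := ∃ h : ℕ → ℕ, ComputableIn A h ∧ DNRFun h

/-- `A` is PA: `A` computes a `{0,1}`-valued diagonally nonrecursive function. -/
def PA (A : Set ℕ) : Prop :=
  ∃ h : ℕ → ℕ, ComputableIn A h ∧ (∀ e, h e ≤ 1) ∧ DNRFun h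

/-! ### Traces -/

/-- The trace `σ` (satisfying `|σ n| ≤ n`) traces the function `f` if
`f n ∈ σ n` for all but finitely many `n`. -/
def Traces (σ : ℕ → Finset ℕ) (f : ℕ → ℕ) : Prop := ∀ᶠ n in atTop, f n ∈ σ n

/-- `σ` is a `(D, g)`-trace relative to `A`: `D` is infinite and c.e. in `A`, `g` is a
partial `A`-computable function with `D ⊆ dom g` and `g n ≥ n` on its domain, and `σ`
is partial `A`-computable, defined on `D`, with `|σ n| < g n` for all `n ∈ D`. -/
def IsDGTraceIn (A : Set ℕ) (D : Set ℕ) (g : ℕ →. ℕ) (σ : ℕ →. Finset ℕ) : Prop :=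
  D.Infinite ∧ CEIn A D ∧ PartrecIn A g ∧ D ⊆ g.Dom ∧ (∀ n, ∀ y ∈ g n, n ≤ y) ∧
  PartrecIn A σ ∧ D ⊆ σ.Dom ∧ ∀ n ∈ D, ∀ S ∈ σ n, ∀ b ∈ g n, S.card < b

/-- `σ` is a `(D, g)`-trace (unrelativized). -/
def IsDGTrace (D : Set ℕ) (g : ℕ →. ℕ) (σ : ℕ →. Finset ℕ) : Prop :=
  D.Infinite ∧ CE D ∧ Partrec g ∧ D ⊆ g.Dom ∧ (∀ n, ∀ y ∈ g n, n ≤ y) ∧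
  Partrec σ ∧ D ⊆ σ.Dom ∧ ∀ n ∈ D, ∀ S ∈ σ n, ∀ b ∈ g n, S.card < b

/-- The `(D, g)`-trace `σ` traces `f`: `f n ∈ σ n` for all but finitely many `n ∈ D`. -/
def DGTraces (D : Set ℕ) (σ : ℕ →. Finset ℕ) (f : ℕ → ℕ) : Prop :=
  ∀ᶠ n in atTop, n ∈ D → ∀ S ∈ σ n, f n ∈ S

/-! ### Auxiliary machinery for the proof -/

open Nat.Partrec (Code)
open Nat.Partrec.Code Denumerable

theorem RecursiveIn.of_eq {A : Set ℕ} {f g : ℕ →. ℕ} (hf : RecursiveIn A f)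
    (H : ∀ n, f n = g n) : RecursiveIn A g := (funext H : f = g) ▸ hf

theorem RecursiveIn.of_partrec {A : Set ℕ} {f : ℕ →. ℕ} (h : Nat.Partrec f) :
    RecursiveIn A f := by
  induction h with
  | zero => exact .zero
  | succ => exact .succ
  | left => exact .left
  | right => exact .right
  | pair _ _ ihf ihg => exact .pair ihf ihg
  | comp _ _ ihf ihg => exact .comp ihf ihg
  | prec _ _ ihf ihg => exact .prec ihf ihg
  | rfind _ ihf => exact .rfind ihf

theorem RecursiveIn.of_computable {A : Set ℕ} {f : ℕ → ℕ} (h : Computable f) :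
    RecursiveIn A ↑f := of_partrec (Partrec.nat_iff.mp h)

theorem computableIn_iff {A : Set ℕ} {f : ℕ → ℕ} :
    ComputableIn A f ↔ RecursiveIn A ↑f := by
  unfold ComputableIn PartrecIn
  constructor <;> intro h <;> refine h.of_eq fun n => ?_ <;>
    simp [Encodable.decode_nat, Part.map_id']

/-- encoding of lists of naturals (the `Primcodable` one). -/
def lenc : List ℕ → ℕ := fun l => Encodable.encode l
def ldec : ℕ → Option (List ℕ) := fun n => Encodable.decode n
def fenc : Finset ℕ → ℕ :=
  fun S => @Encodable.encode _ (@Primcodable.toEncodable _ inferInstance) S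
def psum (l : List ℕ) (j : ℕ) : ℕ := ((List.range (j + 1)).map fun i => l.getD i 0).sum

theorem ldec_lenc (l : List ℕ) : ldec (lenc l) = some l := Encodable.encodek l
theorem ldec_eq_ofNat (y : ℕ) : ldec y = some (ofNat (List ℕ) y) :=
  Denumerable.decode_eq_ofNat (List ℕ) y
theorem lenc_ofNat (y : ℕ) : lenc (ofNat (List ℕ) y) = y := Denumerable.encode_ofNat y
theorem fenc_ofNat (S : Finset ℕ) : ofNat (Finset ℕ) (fenc S) = S := Denumerable.ofNat_encode S

theorem psum_zero (m : ℕ) (l : List ℕ) : psum (m :: l) 0 = m := by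
  simp [psum, List.range_succ, List.getD]
theorem psum_succ (m : ℕ) (l : List ℕ) (j : ℕ) : psum (m :: l) (j + 1) = m + psum l j := by
  unfold psum
  rw [List.range_succ_eq_map, List.map_cons, List.sum_cons, List.map_map]
  have h1 : ((fun i => (m :: l).getD i 0) ∘ Nat.succ) = fun i => l.getD i 0 :=
    funext fun i => List.getD_cons_succ ..
  rw [h1]
  simp [List.getD]

theorem raise'_length : ∀ (l : List ℕ) (N : ℕ), (raise' l N).length = l.length
  | [], _ => rfl
  | _ :: l, _ => by simp [raise', raise'_length l]

theorem raise'_mem_iff : ∀ (l : List ℕ) (N x : ℕ),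
    x ∈ raise' l N ↔ ∃ j < l.length, x = N + psum l j + j
  | [], N, x => by simp [raise']
  | m :: l, N, x => by
    simp only [raise', List.mem_cons, raise'_mem_iff l (m + N + 1) x]
    constructor
    · rintro (rfl | ⟨j, hj, rfl⟩)
      · exact ⟨0, by simp, by simp [psum_zero]; omega⟩
      · exact ⟨j + 1, by simpa using hj, by rw [psum_succ]; omega⟩
    · rintro ⟨j, hj, rfl⟩
      match j with
      | 0 => left; rw [psum_zero]; omega
      | j + 1 =>
        right; exact ⟨j, by simpa using hj, by rw [psum_succ]; omega⟩

theorem add_le_pair (a b : ℕ) : a + b ≤ Nat.pair a b := by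
  rw [Nat.pair]
  split
  · next h =>
    have hb : 1 ≤ b := by omega
    nlinarith
  · nlinarith

theorem lenc_cons (a : ℕ) (l : List ℕ) : lenc (a :: l) = Nat.pair a (lenc l) + 1 := by
  simpa [lenc] using Encodable.encode_list_cons a l

theorem mem_lenc_lt : ∀ {l : List ℕ} {x : ℕ}, x ∈ l → x < lenc l
  | a :: l, x, hx => by
    rcases List.mem_cons.mp hx with rfl | hx
    · have := Nat.left_le_pair x (lenc l)
      rw [lenc_cons]; omega
    · have := mem_lenc_lt hx
      have h2 := Nat.right_le_pair a (lenc l)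
      rw [lenc_cons]; omega

theorem raise'_lt : ∀ (l : List ℕ) (N x : ℕ), x ∈ raise' l N → x < N + lenc l
  | [], _, _ => by simp [raise']
  | m :: l, N, x => by
    intro hx
    rcases List.mem_cons.mp hx with rfl | hx
    · have := Nat.left_le_pair m (lenc l)
      rw [lenc_cons]; omega
    · have := raise'_lt l (m + N + 1) x hx
      have h2 := add_le_pair m (lenc l)
      rw [lenc_cons]; omega

theorem ofNat_finset_def (n : ℕ) : ofNat (Finset ℕ) n =
    Finset.map (Denumerable.eqv ℕ).symm.toEmbedding (raise'Finset (ofNat (List ℕ) n) 0) := rfl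

theorem mem_ofNat_finset {x n : ℕ} :
    x ∈ ofNat (Finset ℕ) n ↔ x ∈ raise' (ofNat (List ℕ) n) 0 := by
  rw [ofNat_finset_def]
  simp [raise'Finset, Denumerable.eqv, Finset.mem_map, Finset.mem_mk, Multiset.mem_coe]
  exact Iff.rfl

theorem card_ofNat_finset (n : ℕ) :
    (ofNat (Finset ℕ) n).card = (ofNat (List ℕ) n).length := by
  rw [ofNat_finset_def]
  simp [raise'Finset, Finset.card_map, Finset.card_mk, raise'_length, Multiset.coe_card]
  exact (Multiset.coe_card _).trans (raise'_length _ _)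

theorem mem_finset_lt {S : Finset ℕ} {x : ℕ} (hx : x ∈ S) : x < fenc S := by
  have h1 : x ∈ raise' (ofNat (List ℕ) (fenc S)) 0 := by
    rw [← mem_ofNat_finset (n := fenc S), fenc_ofNat]; exact hx
  have := raise'_lt _ 0 x h1
  rwa [lenc_ofNat, Nat.zero_add] at this

theorem finset_extract {S : Finset ℕ} {x : ℕ} (hx : x ∈ S) :
    ∃ j < S.card, x = psum (ofNat (List ℕ) (fenc S)) j + j := by
  have h1 : x ∈ raise' (ofNat (List ℕ) (fenc S)) 0 := by
    rw [← mem_ofNat_finset (n := fenc S), fenc_ofNat]; exact hx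
  rw [raise'_mem_iff] at h1
  obtain ⟨j, hj, rfl⟩ := h1
  refine ⟨j, ?_, by omega⟩
  have hc : (ofNat (List ℕ) (fenc S)).length = S.card := by
    conv_rhs => rw [← fenc_ofNat S]
    rw [card_ofNat_finset]
  omega

theorem sum_primrec : Primrec (List.sum : List ℕ → ℕ) := by
  have h : Primrec₂ fun (_ : List ℕ) (p : ℕ × ℕ) => p.1 + p.2 :=
    Primrec.nat_add.comp (Primrec.fst.comp Primrec.snd) (Primrec.snd.comp Primrec.snd)
  have := Primrec.list_foldr Primrec.id (Primrec.const 0) h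
  exact this.of_eq fun l => by
    simp only [id]
    induction l with
    | nil => simp
    | cons a l ih => simpa using ih

theorem psum_primrec : Primrec₂ psum := by
  have hgetD : Primrec fun p : (List ℕ × ℕ) × ℕ => p.1.1.getD p.2 0 :=
    Primrec₂.comp Primrec.option_getD
      (Primrec.list_getElem?.comp (Primrec.fst.comp Primrec.fst) Primrec.snd) (Primrec.const 0)
  have hmap : Primrec fun p : List ℕ × ℕ => (List.range (p.2 + 1)).map fun i => p.1.getD i 0 :=
    Primrec.list_map (Primrec.list_range.comp (Primrec.succ.comp Primrec.snd)) hgetD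
  exact sum_primrec.comp hmap

/-- The list-collection closure lemma. -/
theorem RecursiveIn.listMap {A : Set ℕ} {h : ℕ → ℕ} (hh : RecursiveIn A ↑h)
    {E : ℕ → ℕ → ℕ} (hE : Computable₂ E) {B : ℕ → ℕ} (hB : Computable B) :
    RecursiveIn A ↑(fun m => lenc ((List.range (B m)).map fun k => h (E m k))) := by
  set u : ℕ → ℕ := fun z => E z.unpair.1 z.unpair.2.unpair.1 with hu_def
  have hu : Computable u := hE.comp (Computable.fst.comp Computable.unpair)
    (Computable.fst.comp (Computable.unpair.comp (Computable.snd.comp Computable.unpair)))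
  set C : ℕ → ℕ := fun t => lenc (((ldec t.unpair.1.unpair.2.unpair.2).getD []) ++ [t.unpair.2])
    with hC_def
  have hC : Computable C := by
    have h1 : Computable fun t : ℕ => ((ldec t.unpair.1.unpair.2.unpair.2).getD []) :=
      Computable.option_getD
        (Computable.decode.comp (Computable.snd.comp (Computable.unpair.comp
          (Computable.snd.comp (Computable.unpair.comp (Computable.fst.comp Computable.unpair))))))
        (Computable.const [])
    have h2 : Computable fun t : ℕ => [t.unpair.2] :=
      (Primrec.list_cons.comp (Primrec.snd.comp Primrec.unpair) (Primrec.const [])).to_comp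
    exact Computable.encode.comp ((Primrec.list_append.to_comp).comp h1 h2)
  have idRec : RecursiveIn A ↑(id : ℕ → ℕ) := .of_computable Computable.id
  have g4 := (RecursiveIn.comp (RecursiveIn.of_computable hC)
      (RecursiveIn.pair idRec (RecursiveIn.comp hh (RecursiveIn.of_computable hu)))).of_eq
    (g := fun z => Part.some (C (Nat.pair z (h (u z))))) fun z => by
      simp [Seq.seq, PFun.coe_val, Part.bind_eq_bind]
      change (Part.map (Nat.pair z) ((Part.some (u z)).bind fun n => Part.some (h n))).bind
        (fun n => Part.some (C n)) = _
      rw [Part.bind_some, Part.map_some, Part.bind_some]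
  have base : RecursiveIn A ↑(fun _ : ℕ => lenc ([] : List ℕ)) :=
    .of_computable (Computable.const _)
  have main := RecursiveIn.prec base g4
  have hfin : Computable fun m => Nat.pair m (B m) :=
    Primrec₂.natPair.to_comp.comp Computable.id hB
  have fin : RecursiveIn A ↑(fun m => Nat.pair m (B m)) := RecursiveIn.of_computable hfin
  refine (RecursiveIn.comp main fin).of_eq fun m => ?_
  simp only [Nat.unpaired, PFun.coe_val, Part.bind_some, Part.bind_eq_bind, Nat.unpair_pair]
  generalize B m = n
  induction n with
  | zero => simp [lenc]
  | succ n ih =>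
    change (Nat.rec (Part.some (lenc []))
      (fun y IH =>
        IH.bind fun i => Part.some (C (Nat.pair (Nat.pair m (Nat.pair y i))
          (h (u (Nat.pair m (Nat.pair y i))))))) n : Part ℕ).bind
      (fun i => Part.some (C (Nat.pair (Nat.pair m (Nat.pair n i))
        (h (u (Nat.pair m (Nat.pair n i))))))) = _
    rw [ih]
    simp only [Part.bind_some, Part.some_inj, Nat.unpair_pair]
    simp [hC_def, hu_def, ldec_lenc, List.range_succ]

theorem computableIn_listMap {A : Set ℕ} {h : ℕ → ℕ} (hh : ComputableIn A h)
    {E : ℕ → ℕ → ℕ} (hE : Computable₂ E) {B : ℕ → ℕ} (hB : Computable B) :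
    ComputableIn A (fun m => lenc ((List.range (B m)).map fun k => h (E m k))) :=
  computableIn_iff.mpr ((computableIn_iff.mp hh).listMap hE hB)

theorem partrec_natOf {σ : ℕ →. Finset ℕ} (h : Partrec σ) :
    Nat.Partrec fun n => (σ n).map fenc :=
  Nat.Partrec.of_eq h fun n => by
    simp only [Encodable.decode_nat, Part.coe_some, Part.bind_some]
    rfl

theorem ce_code {D : Set ℕ} (h : CE D) : ∃ c : Code, ∀ n, n ∈ D ↔ (c.eval n).Dom := by
  obtain ⟨p, pp, hp⟩ := h
  have h'' : Nat.Partrec fun n => (p n).map (fun x => x) :=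
    Nat.Partrec.of_eq pp fun n => by
      simp only [Encodable.decode_nat, Part.coe_some, Part.bind_some]
      rfl
  obtain ⟨c, hc⟩ := exists_code.mp h''
  refine ⟨c, fun n => (hp n).trans ?_⟩
  rw [hc]
  simp [Part.map_id', Part.dom_iff_mem]

theorem list_get?_map (f : ℕ → ℕ) (l : List ℕ) (n : ℕ) :
    (l.map f)[n]? = (l[n]?).map f := by
  simp

/-- Extracting a computable dominating function from codes for a trace. -/
theorem dominator (f : ℕ → ℕ) (D : Set ℕ) (hD : D.Infinite) (cp cσ : Code)
    (hp : ∀ n, n ∈ D ↔ (cp.eval n).Dom) (hσ : ∀ n ∈ D, (cσ.eval n).Dom)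
    (N : ℕ) (key : ∀ n, N ≤ n → ∀ m, n ≤ m → m ∈ D → ∀ y ∈ cσ.eval m, f n ≤ y) :
    ∃ G : ℕ → ℕ, Computable G ∧ ∀ᶠ n in atTop, f n ≤ G n := by
  classical
  set find : ℕ → ℕ → Option ℕ := fun n k =>
    (evaln k.unpair.2 cp (n + k.unpair.1)).bind fun _ => evaln k.unpair.2 cσ (n + k.unpair.1)
    with hfind_def
  have hev : ∀ c : Code, Primrec fun p : ℕ × ℕ => evaln p.2.unpair.2 c (p.1 + p.2.unpair.1) :=
    fun c => primrec_evaln.comp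
      (Primrec.pair
        (Primrec.pair (Primrec.snd.comp (Primrec.unpair.comp Primrec.snd)) (Primrec.const c))
        (Primrec.nat_add.comp Primrec.fst (Primrec.fst.comp (Primrec.unpair.comp Primrec.snd))))
  have hfind : Computable₂ find :=
    Primrec.to_comp (Primrec.option_bind (hev cp) ((hev cσ).comp Primrec.fst))
  have hGP : Partrec fun n => Nat.rfindOpt (find n) := Partrec.rfindOpt hfind
  have hdom : ∀ n, (Nat.rfindOpt (find n)).Dom := by
    intro n
    obtain ⟨m, hmD, hmn⟩ := hD.exists_gt n
    obtain ⟨a, ha⟩ := Part.dom_iff_mem.mp ((hp m).mp hmD)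
    obtain ⟨y, hy⟩ := Part.dom_iff_mem.mp (hσ m hmD)
    obtain ⟨s1, hs1⟩ := evaln_complete.mp ha
    obtain ⟨s2, hs2⟩ := evaln_complete.mp hy
    rw [Nat.rfindOpt_dom]
    refine ⟨Nat.pair (m - n) (max s1 s2), y, ?_⟩
    have hmn' : n + (m - n) = m := by omega
    have e1 : evaln (max s1 s2) cp m = some a :=
      Option.mem_def.mp (evaln_mono (le_max_left s1 s2) hs1)
    have e2 : evaln (max s1 s2) cσ m = some y :=
      Option.mem_def.mp (evaln_mono (le_max_right s1 s2) hs2)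
    simp only [hfind_def, Nat.unpair_pair, hmn', e1, e2, Option.bind_some, Option.mem_def]
  set G : ℕ → ℕ := fun n => (Nat.rfindOpt (find n)).get (hdom n) with hG_def
  have hG : Computable G := Partrec.of_eq_tot hGP fun n => Part.get_mem _
  refine ⟨G, hG, ?_⟩
  rw [Filter.eventually_atTop]
  refine ⟨N, fun n hn => ?_⟩
  have hmem : G n ∈ Nat.rfindOpt (find n) := Part.get_mem _
  obtain ⟨k, hk⟩ := Nat.rfindOpt_spec hmem
  rw [hfind_def, Option.mem_def] at hk
  obtain ⟨a, ha, hb⟩ := Option.bind_eq_some_iff.mp hk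
  have hmD : (n + k.unpair.1) ∈ D :=
    (hp _).mpr (Part.dom_iff_mem.mpr ⟨a, evaln_sound (Option.mem_def.mpr ha)⟩)
  have hyy : G n ∈ cσ.eval (n + k.unpair.1) := evaln_sound (Option.mem_def.mpr hb)
  exact key n hn _ (Nat.le_add_right n _) hmD _ hyy


/-- if there is a total computable `g` (with `g n ≥ n`) such that every
`f ≤_T A` is traced by some `(D, g)`-trace, then `A` is of hyperimmune-free degree and
`A` is not DNR. -/
theorem stmt10 (A : Set ℕ) (g : ℕ → ℕ) (hg : Computable g) (hgid : ∀ n, n ≤ g n)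
    (htr : ∀ f : ℕ → ℕ, ComputableIn A f →
      ∃ (D : Set ℕ) (σ : ℕ →. Finset ℕ), IsDGTrace D ↑g σ ∧ DGTraces D σ f) :
    HyperimmuneFree A ∧ ¬ DNRDegree A := by
  constructor
  · -- Hyperimmune-free
    intro f hf
    have hE0 : Computable₂ fun (_ k : ℕ) => k := Computable.snd
    have hB0 : Computable fun m : ℕ => m + 1 := Computable.succ
    set F : ℕ → ℕ := fun m => lenc ((List.range (m + 1)).map fun k => f k) with hF_def
    have hFc : ComputableIn A F := computableIn_listMap hf hE0 hB0
    obtain ⟨D, σ, tr, trs⟩ := htr F hFc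
    obtain ⟨hDinf, hDce, -, -, -, hσpr, hσdom, hcard⟩ := tr
    obtain ⟨cp, hcp⟩ := ce_code hDce
    obtain ⟨cσ, hcσ⟩ := exists_code.mp (partrec_natOf hσpr)
    obtain ⟨N, hN⟩ := Filter.eventually_atTop.mp trs
    refine dominator f D hDinf cp cσ hcp ?_ N ?_
    · intro n hnD
      have hd : (σ n).Dom := hσdom hnD
      obtain ⟨S, hS⟩ := Part.dom_iff_mem.mp hd
      rw [hcσ]
      exact Part.dom_iff_mem.mpr ⟨fenc S, Part.mem_map fenc hS⟩
    · intro n hn m hnm hmD y hy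
      rw [hcσ] at hy
      obtain ⟨S, hS, rfl⟩ := (Part.mem_map_iff _).mp hy
      have hFm : F m ∈ S := hN m (le_trans hn hnm) hmD S hS
      have h1 : f n < F m := by
        rw [hF_def]
        exact mem_lenc_lt (List.mem_map.mpr ⟨n, List.mem_range.mpr (by omega), rfl⟩)
      have h2 : F m < fenc S := mem_finset_lt hFm
      omega
  · -- not DNR
    rintro ⟨h, hhA, hDNR⟩
    -- the candidate-extraction partial function
    set post : ℕ → ℕ → Option ℕ := fun w y =>
      ((ldec (psum ((ldec y).getD []) w.unpair.2.unpair.2 + w.unpair.2.unpair.2)).getD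
        [])[w.unpair.1 * g w.unpair.2.unpair.1 + w.unpair.2.unpair.2]? with hpost_def
    have hpost : Computable₂ post := by
      have hj : Computable fun p : ℕ × ℕ => p.1.unpair.2.unpair.2 :=
        (Primrec.snd.comp (Primrec.unpair.comp
          (Primrec.snd.comp (Primrec.unpair.comp Primrec.fst)))).to_comp
      have hm : Computable fun p : ℕ × ℕ => p.1.unpair.2.unpair.1 :=
        (Primrec.fst.comp (Primrec.unpair.comp
          (Primrec.snd.comp (Primrec.unpair.comp Primrec.fst)))).to_comp
      have hc : Computable fun p : ℕ × ℕ => p.1.unpair.1 :=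
        (Primrec.fst.comp (Primrec.unpair.comp Primrec.fst)).to_comp
      have hL : Computable fun p : ℕ × ℕ => (ldec p.2).getD [] :=
        Computable.option_getD (Computable.decode.comp Computable.snd) (Computable.const [])
      have ht : Computable fun p : ℕ × ℕ =>
          psum ((ldec p.2).getD []) p.1.unpair.2.unpair.2 + p.1.unpair.2.unpair.2 :=
        Primrec.nat_add.to_comp.comp (psum_primrec.to_comp.comp hL hj) hj
      have hinner : Computable fun p : ℕ × ℕ =>
          (ldec (psum ((ldec p.2).getD []) p.1.unpair.2.unpair.2 + p.1.unpair.2.unpair.2)).getD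
            [] :=
        Computable.option_getD (Computable.decode.comp ht) (Computable.const [])
      have hq : Computable fun p : ℕ × ℕ =>
          p.1.unpair.1 * g p.1.unpair.2.unpair.1 + p.1.unpair.2.unpair.2 :=
        Primrec.nat_add.to_comp.comp
          (Primrec.nat_mul.to_comp.comp hc (hg.comp hm)) hj
      exact Primrec.list_getElem?.to_comp.comp hinner hq
    -- the uniform diagonal machine
    set Ψ : ℕ →. ℕ := fun z =>
      ((ofNat Code z.unpair.1.unpair.1).eval z.unpair.1.unpair.2.unpair.1).bind fun y =>
        (post z.unpair.1 y : Part ℕ) with hΨ_def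
    have hΨ : Partrec Ψ := by
      have hcode : Computable fun z : ℕ => ofNat Code z.unpair.1.unpair.1 :=
        (Computable.ofNat Code).comp
          (Primrec.fst.comp (Primrec.unpair.comp
            (Primrec.fst.comp Primrec.unpair))).to_comp
      have harg : Computable fun z : ℕ => z.unpair.1.unpair.2.unpair.1 :=
        (Primrec.fst.comp (Primrec.unpair.comp (Primrec.snd.comp (Primrec.unpair.comp
          (Primrec.fst.comp Primrec.unpair))))).to_comp
      have hev : Partrec fun z : ℕ =>
          (ofNat Code z.unpair.1.unpair.1).eval z.unpair.1.unpair.2.unpair.1 :=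
        eval_part.comp hcode harg
      have hpost2 : Computable fun p : ℕ × ℕ => post p.1.unpair.1 p.2 :=
        hpost.comp ((Primrec.fst.comp (Primrec.unpair.comp Primrec.fst)).to_comp)
          Computable.snd
      exact hev.bind (Computable.ofOption hpost2)
    obtain ⟨u, hu⟩ := exists_code.mp (Partrec.nat_iff.mp hΨ)
    set e : ℕ → ℕ := fun w => Encodable.encode (u.curry w) with he_def
    have he : Computable e :=
      (Primrec.encode.comp (primrec₂_curry.comp (Primrec.const u) Primrec.id)).to_comp
    set E : ℕ → ℕ → ℕ := fun m k => e (Nat.pair (k / g m) (Nat.pair m (k % g m))) with hE_def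
    have hE : Computable₂ E := by
      have hdiv : Computable fun p : ℕ × ℕ => p.2 / g p.1 :=
        Primrec.nat_div.to_comp.comp Computable.snd (hg.comp Computable.fst)
      have hmod : Computable fun p : ℕ × ℕ => p.2 % g p.1 :=
        Primrec.nat_mod.to_comp.comp Computable.snd (hg.comp Computable.fst)
      exact he.comp (Primrec₂.natPair.to_comp.comp hdiv
        (Primrec₂.natPair.to_comp.comp Computable.fst hmod))
    have hB : Computable fun m : ℕ => m * g m :=
      Primrec.nat_mul.to_comp.comp Computable.id hg
    set F : ℕ → ℕ := fun m => lenc ((List.range (m * g m)).map fun k => h (E m k)) with hF_def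
    have hFc : ComputableIn A F := computableIn_listMap hhA hE hB
    obtain ⟨D, σ, tr, trs⟩ := htr F hFc
    obtain ⟨hDinf, -, -, -, -, hσpr, hσdom, hcard⟩ := tr
    obtain ⟨cσ, hcσ⟩ := exists_code.mp (partrec_natOf hσpr)
    obtain ⟨N, hN⟩ := Filter.eventually_atTop.mp trs
    set cn : ℕ := Encodable.encode cσ with hcn_def
    obtain ⟨m, hmD, hm⟩ := hDinf.exists_gt (max cn N)
    have hSdom : (σ m).Dom := hσdom hmD
    set S : Finset ℕ := (σ m).get hSdom with hS_def
    have hS : S ∈ σ m := Part.get_mem _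
    have hgm : g m ∈ (↑g : ℕ →. ℕ) m := ⟨trivial, rfl⟩
    have hcardS : S.card < g m := hcard m hmD S hS (g m) hgm
    have hFm : F m ∈ S := hN m (le_trans (le_max_right _ _) (le_of_lt hm)) hmD S hS
    obtain ⟨j, hjcard, hFmeq⟩ := finset_extract hFm
    set w : ℕ := Nat.pair cn (Nat.pair m j) with hw_def
    have hcnm : cn < m := lt_of_le_of_lt (le_max_left _ _) hm
    have hm1 : 1 ≤ m := by omega
    have hgm1 : 1 ≤ g m := le_trans hm1 (hgid m)
    have hjg : j < g m := lt_trans hjcard hcardS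
    have hq : cn * g m + j < m * g m := by
      have h1 : cn * g m + j < (cn + 1) * g m := by
        rw [Nat.add_mul, Nat.one_mul]; omega
      have h2 : (cn + 1) * g m ≤ m * g m := Nat.mul_le_mul_right _ (by omega)
      omega
    have hEq : E m (cn * g m + j) = e w := by
      have h1 : (cn * g m + j) / g m = cn := by
        rw [Nat.add_comm, Nat.mul_comm, Nat.add_mul_div_left _ _ (by omega : 0 < g m),
          Nat.div_eq_of_lt hjg, Nat.zero_add]
      have h2 : (cn * g m + j) % g m = j := by
        rw [Nat.add_comm, Nat.mul_comm, Nat.add_mul_mod_self_left, Nat.mod_eq_of_lt hjg]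
      show e (Nat.pair ((cn * g m + j) / g m) (Nat.pair m ((cn * g m + j) % g m))) = e w
      rw [h1, h2, hw_def]
    have hbig : ((List.range (m * g m)).map fun k => h (E m k))[cn * g m + j]? =
        some (h (e w)) := by
      rw [list_get?_map, List.getElem?_range hq, Option.map_some, hEq]
    have hσm : σ m = Part.some S := Part.eq_some_iff.mpr hS
    have hevalσ : cσ.eval m = Part.some (fenc S) := by
      rw [hcσ]
      simp only [hσm, Part.map_some]
    have hLdecF : ldec (F m) = some ((List.range (m * g m)).map fun k => h (E m k)) := by
      rw [hF_def]; exact ldec_lenc _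
    have hwu1 : w.unpair.1 = cn := by rw [hw_def, Nat.unpair_pair]
    have hwu21 : w.unpair.2.unpair.1 = m := by rw [hw_def, Nat.unpair_pair, Nat.unpair_pair]
    have hwu22 : w.unpair.2.unpair.2 = j := by rw [hw_def, Nat.unpair_pair, Nat.unpair_pair]
    have hpostval : post w (fenc S) = some (h (e w)) := by
      show ((ldec (psum ((ldec (fenc S)).getD []) w.unpair.2.unpair.2 +
          w.unpair.2.unpair.2)).getD [])[
          (w.unpair.1 * g w.unpair.2.unpair.1 + w.unpair.2.unpair.2)]? = some (h (e w))
      rw [hwu1, hwu21, hwu22, ldec_eq_ofNat (fenc S), Option.getD_some, ← hFmeq, hLdecF,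
        Option.getD_some]
      exact hbig
    have hΨw : ∀ x : ℕ, (u.curry w).eval x = Part.some (h (e w)) := fun x => by
      rw [eval_curry, hu]
      show ((ofNat Code (Nat.pair w x).unpair.1.unpair.1).eval
          (Nat.pair w x).unpair.1.unpair.2.unpair.1).bind
          (fun y => (post (Nat.pair w x).unpair.1 y : Part ℕ)) = _
      simp only [Nat.unpair_pair]
      rw [hwu1, hwu21, hcn_def, Denumerable.ofNat_encode, hevalσ, Part.bind_some, hpostval]
      rfl
    have hphi : h (e w) ∈ phi (e w) (e w) := by
      show h (e w) ∈ (ofNat Code (e w)).eval (e w)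
      have hco : ofNat Code (e w) = u.curry w := Denumerable.ofNat_encode (u.curry w)
      rw [hco, hΨw]
      exact Part.mem_some _
    exact (hDNR (e w) (h (e w)) hphi) rfl


end CichonAnalog
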